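/- Let G be a graph, C a longest cycle in G with a fixed orientation, and H a component of G − V(C). If u, v ∈ N_G(V(H)) are distinct, then there is no u⁺v⁺-path in G all of whose internal vertices avoid V(C); in particular u⁺v⁺ ∉ E(G). -/

import Mathlib

open SimpleGraph

variable {V : Type*}

/-- The number of connected components after deleting the vertex set `S`. -/
noncomputable def omegaDel [Fintype V] (G : SimpleGraph V) (S : Finset V) : ℕ :=
  Nat.card ((G.induce ((S : Set V)ᶜ)).ConnectedComponent)

/-- `G` is `m`-connected. -/
def IsKConn [Fintype V] (G : SimpleGraph V) (m : ℕ) : Prop :=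
  m < Fintype.card V ∧ ∀ S : Finset V, S.card < m → (G.induce ((S : Set V)ᶜ)).Connected

/-- The independence number of `G`. -/
noncomputable def alphaNum [Fintype V] (G : SimpleGraph V) : ℕ :=
  sSup {n | ∃ s : Finset V, (∀ a ∈ s, ∀ b ∈ s, ¬ G.Adj a b) ∧ s.card = n}

/-- The minimum degree of `G`. -/
noncomputable def minDeg [Fintype V] (G : SimpleGraph V) : ℕ :=
  sInf {d | ∃ v : V, (G.neighborSet v).ncard = d}

/-- The graph `K₂ ∪ kK₁`. -/
def K2kK1 (k : ℕ) : SimpleGraph (Fin 2 ⊕ Fin k) :=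
  SimpleGraph.fromRel fun a b => a.isLeft ∧ b.isLeft

/-- `G` contains no induced copy of `H`. -/
def IndFree {W : Type*} (H : SimpleGraph W) (G : SimpleGraph V) : Prop :=
  IsEmpty (H ↪g G)

/-- `G` has a hamiltonian cycle. -/
def Ham [DecidableEq V] (G : SimpleGraph V) : Prop :=
  ∃ (a : V) (p : G.Walk a a), p.IsHamiltonianCycle

/-- `G` is hamiltonian-connected. -/
def HamConn [DecidableEq V] (G : SimpleGraph V) : Prop :=
  ∀ a b : V, a ≠ b → ∃ p : G.Walk a b, p.IsHamiltonian

/-- The Petersen graph. -/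
def petersen : SimpleGraph (ZMod 5 ⊕ ZMod 5) :=
  SimpleGraph.fromRel fun a b =>
    match a, b with
    | Sum.inl i, Sum.inl j => i = j + 1
    | Sum.inr i, Sum.inr j => i = j + 2
    | Sum.inl i, Sum.inr j => i = j
    | _, _ => False


section AuxStmt7
open Walk

section Arc
variable {V : Type*} {G : SimpleGraph V} {n : ℕ}

/-- Forward arc along the cycle. -/
def arcW (f : ZMod n → V) (hadj : ∀ i : ZMod n, G.Adj (f i) (f (i + 1))) :
    (a : ZMod n) → (k : ℕ) → G.Walk (f a) (f (a + (k : ZMod n)))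
  | a, 0 => Walk.nil.copy rfl (by norm_num)
  | a, (k+1) => (Walk.cons (hadj a) (arcW f hadj (a+1) k)).copy rfl
      (by congr 1; push_cast; ring)

@[simp] lemma arcW_length (f : ZMod n → V) (hadj : ∀ i : ZMod n, G.Adj (f i) (f (i + 1)))
    (a : ZMod n) (k : ℕ) : (arcW f hadj a k).length = k := by
  induction k generalizing a with
  | zero => simp [arcW]
  | succ k ih => simp [arcW, ih]

lemma arcW_support (f : ZMod n → V) (hadj : ∀ i : ZMod n, G.Adj (f i) (f (i + 1)))
    (a : ZMod n) (k : ℕ) :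
    (arcW f hadj a k).support = (List.range (k+1)).map (fun i : ℕ => f (a + (i : ZMod n))) := by
  induction k generalizing a with
  | zero => simp [arcW, List.range_succ]
  | succ k ih =>
      rw [List.range_succ_eq_map]
      simp only [arcW, support_copy, support_cons, ih, List.map_cons, List.map_map]
      congr 1
      · norm_num
      · apply List.map_congr_left
        intro i _
        simp only [Function.comp_apply]
        congr 1
        push_cast
        ring

end Arc

section Helpers
variable {V : Type*} {G : SimpleGraph V} {n : ℕ}

lemma castnat_inj {n : ℕ} {i j : ℕ} (hi : i < n) (hj : j < n)
    (h : (i : ZMod n) = (j : ZMod n)) : i = j := by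
  haveI : NeZero n := ⟨by omega⟩
  have := congrArg ZMod.val h
  rwa [ZMod.val_cast_of_lt hi, ZMod.val_cast_of_lt hj] at this

lemma arcW_support_nodup [NeZero n] (f : ZMod n → V)
    (hadj : ∀ i : ZMod n, G.Adj (f i) (f (i + 1))) (hinj : Function.Injective f)
    (a : ZMod n) {k : ℕ} (hk : k < n) : (arcW f hadj a k).support.Nodup := by
  rw [arcW_support]
  refine List.Nodup.map_on ?_ List.nodup_range
  intro i hi j hj hij
  rw [List.mem_range] at hi hj
  have := hinj hij
  have := add_left_cancel this
  exact castnat_inj (by omega) (by omega) this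

lemma mem_arcW_support (f : ZMod n → V)
    (hadj : ∀ i : ZMod n, G.Adj (f i) (f (i + 1))) (a : ZMod n) (k : ℕ) {w : V} :
    w ∈ (arcW f hadj a k).support ↔ ∃ i ≤ k, w = f (a + (i : ZMod n)) := by
  rw [arcW_support]
  simp only [List.mem_map, List.mem_range]
  constructor
  · rintro ⟨i, hi, rfl⟩; exact ⟨i, by omega, rfl⟩
  · rintro ⟨i, hi, rfl⟩; exact ⟨i, by omega, rfl⟩

lemma start_not_mem_support_tail {a b : V} {p : G.Walk a b} (hp : p.IsPath) :
    a ∉ p.support.tail := by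
  have h := hp.support_nodup
  rw [p.support_eq_cons] at h
  exact (List.nodup_cons.mp h).1

lemma mem_of_mem_support_tail {a b : V} {p : G.Walk a b} {w : V}
    (hw : w ∈ p.support.tail) : w ∈ p.support := by
  rw [p.support_eq_cons]; exact List.mem_cons_of_mem _ hw

lemma length_takeUntil_lt {u a b : V} [DecidableEq V] (p : G.Walk a b) (h : u ∈ p.support)
    (hne : u ≠ b) : (p.takeUntil u h).length < p.length := by
  have hs := congrArg Walk.length (p.take_spec h)
  rw [Walk.length_append] at hs
  have h0 : (p.dropUntil u h).length ≠ 0 := fun h0 => hne (Walk.eq_of_length_eq_zero h0)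
  omega

lemma end_not_mem_takeUntil {u a b : V} [DecidableEq V] {p : G.Walk a b} (hp : p.IsPath)
    (h : u ∈ p.support) (hne : u ≠ b) : b ∉ (p.takeUntil u h).support := by
  intro hb
  have hnd := hp.support_nodup
  rw [← p.take_spec h, Walk.support_append] at hnd
  have hdisj := List.disjoint_of_nodup_append hnd
  refine hdisj hb ?_
  have hbd : b ∈ (p.dropUntil u h).support := Walk.end_mem_support _
  rw [(p.dropUntil u h).support_eq_cons] at hbd
  rcases List.mem_cons.mp hbd with hbd | hbd
  · exact absurd hbd.symm hne
  · exact hbd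

lemma exists_path_in_comp {s : Set V} (H : (G.induce s).ConnectedComponent) {x y : ↥s}
    (hx : x ∈ H.supp) (hy : y ∈ H.supp) :
    ∃ W : G.Walk x.val y.val, W.IsPath ∧ ∀ w ∈ W.support, w ∈ Subtype.val '' H.supp := by
  classical
  rw [ConnectedComponent.mem_supp_iff] at hx hy
  obtain ⟨q0⟩ := ConnectedComponent.exact (hx.trans hy.symm)
  set q : (G.induce s).Path x y := q0.toPath with hq
  refine ⟨(q : (G.induce s).Walk x y).map (SimpleGraph.Embedding.induce s).toHom,
    Walk.map_isPath_of_injective Subtype.val_injective q.2, ?_⟩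
  intro w hw
  change w ∈ ((q : (G.induce s).Walk x y).map (SimpleGraph.Embedding.induce s).toHom).support at hw
  rw [Walk.support_map, List.mem_map] at hw
  obtain ⟨w', hw', rfl⟩ := hw
  refine ⟨w', ?_, rfl⟩
  rw [ConnectedComponent.mem_supp_iff, ← hx]
  exact (ConnectedComponent.sound ⟨((q : (G.induce s).Walk x y).takeUntil w' hw')⟩).symm

end Helpers

section Cycle2
variable {V : Type*} {G : SimpleGraph V}

lemma one_ne_zero_zmod {n : ℕ} (hn : 3 ≤ n) : (1 : ZMod n) ≠ 0 := by
  intro h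
  have : ((1 : ℕ) : ZMod n) = ((0 : ℕ) : ZMod n) := by push_cast; exact h
  have := castnat_inj (by omega) (by omega) this
  omega

lemma cycle2 {n : ℕ} (hn : 3 ≤ n) (f : ZMod n → V) (hinj : Function.Injective f)
    (hadj : ∀ i : ZMod n, G.Adj (f i) (f (i + 1)))
    (hlong : ∀ (v : V) (c : G.Walk v v), c.IsCycle → c.length ≤ n)
    (H : (G.induce (Set.range f)ᶜ).ConnectedComponent)
    (u : ZMod n) (hu : ∃ h ∈ Subtype.val '' H.supp, G.Adj (f u) h)
    {y : V} (q : G.Walk (f (u+1)) y) (hq : q.IsPath) (hy : y ∈ Subtype.val '' H.supp)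
    (hR : ∀ w ∈ q.support, w ≠ f (u + 1) → w ∉ Set.range f)
    (hH : ∀ w ∈ q.support, w ≠ f (u + 1) → w ≠ y → w ∉ Subtype.val '' H.supp) : False := by
  classical
  haveI : NeZero n := ⟨by omega⟩
  have himgR : ∀ w ∈ Subtype.val '' H.supp, w ∉ Set.range f := by
    rintro w ⟨w', _, rfl⟩; exact w'.2
  obtain ⟨h0, hh0, hadju⟩ := hu
  obtain ⟨y', hy', hyv⟩ := hy
  obtain ⟨hu', hhu', hhv⟩ := hh0
  subst hyv
  subst hhv
  obtain ⟨W, hW, hWs⟩ := exists_path_in_comp H hy' hhu'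
  have hcast : ((n - 1 : ℕ) : ZMod n) = -1 := by
    rw [Nat.cast_sub (by omega), ZMod.natCast_self]; ring
  have hend : f (u + 1 + ((n-1 : ℕ) : ZMod n)) = f u := by rw [hcast]; congr 1; ring
  set B : G.Walk (f (u+1)) (f u) := (arcW f hadj (u+1) (n-1)).copy rfl hend with hBdef
  have hBsup : B.support = (arcW f hadj (u+1) (n-1)).support := Walk.support_copy _ rfl hend
  have hBnodup : B.support.Nodup := by
    rw [hBsup]; exact arcW_support_nodup f hadj hinj _ (by omega)
  have hBpath : B.IsPath := Walk.IsPath.mk' hBnodup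
  have hBran : ∀ w ∈ B.support, w ∈ Set.range f := by
    intro w hw
    rw [hBsup, mem_arcW_support] at hw
    obtain ⟨i, _, rfl⟩ := hw
    exact ⟨_, rfl⟩
  -- key ne facts
  have h1ne : f (u + 1) ≠ (y' : V) := by
    intro h; exact himgR _ ⟨y', hy', rfl⟩ (h ▸ ⟨u + 1, rfl⟩)
  have hfu_mem : (f u) ∈ Set.range f := ⟨u, rfl⟩
  have hfu1_mem : (f (u+1)) ∈ Set.range f := ⟨u + 1, rfl⟩
  have hfune : f u ≠ f (u + 1) := by
    intro h
    have := hinj h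
    exact one_ne_zero_zmod hn (by rwa [left_eq_add] at this)
  -- the cycle
  set P2 : G.Walk (hu' : V) (f u) := W.reverse.append (q.reverse.append B) with hP2def
  -- membership facts for segments
  have hWrev : ∀ w ∈ W.reverse.support, w ∈ Subtype.val '' H.supp := by
    intro w hw; rw [Walk.support_reverse, List.mem_reverse] at hw; exact hWs w hw
  have hqrevtail : ∀ w ∈ q.reverse.support.tail, w ∈ q.support ∧ w ≠ (y' : V) := by
    intro w hw
    refine ⟨?_, ?_⟩
    · have := mem_of_mem_support_tail hw
      rwa [Walk.support_reverse, List.mem_reverse] at this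
    · intro h; subst h; exact start_not_mem_support_tail hq.reverse hw
  have hBtail : ∀ w ∈ B.support.tail, w ∈ Set.range f ∧ w ≠ f (u + 1) := by
    intro w hw
    refine ⟨hBran w (mem_of_mem_support_tail hw), ?_⟩
    intro h; subst h; exact start_not_mem_support_tail hBpath hw
  have hP2path : P2.IsPath := by
    apply Walk.IsPath.mk'
    rw [hP2def, Walk.support_append, Walk.tail_support_append]
    rw [List.nodup_append]
    refine ⟨hW.reverse.support_nodup, ?_, ?_⟩
    · rw [List.nodup_append]
      refine ⟨hq.reverse.support_nodup.tail, hBnodup.tail, ?_⟩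
      intro w hw x hwB hwx; subst hwx
      obtain ⟨hwq, hwy⟩ := hqrevtail w hw
      obtain ⟨hwR, hwu1⟩ := hBtail w hwB
      exact hR w hwq hwu1 hwR
    · intro w hw x hw2 hwx; subst hwx
      have hwH := hWrev w hw
      rcases List.mem_append.mp hw2 with hw2 | hw2
      · obtain ⟨hwq, hwy⟩ := hqrevtail w hw2
        by_cases hwu1 : w = f (u + 1)
        · exact himgR w hwH (hwu1 ▸ hfu1_mem)
        · exact hH w hwq hwu1 hwy hwH
      · exact himgR w hwH (hBtail w hw2).1
  have hedge : s(f u, (hu' : V)) ∉ P2.edges := by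
    rw [hP2def, Walk.edges_append, Walk.edges_append]
    intro hmem
    rcases List.mem_append.mp hmem with hmem | hmem
    · have := Walk.fst_mem_support_of_mem_edges _ hmem
      exact himgR _ (hWrev _ this) hfu_mem
    rcases List.mem_append.mp hmem with hmem | hmem
    · have := Walk.fst_mem_support_of_mem_edges _ hmem
      rw [Walk.support_reverse, List.mem_reverse] at this
      exact hR _ this hfune hfu_mem
    · have := Walk.snd_mem_support_of_mem_edges _ hmem
      exact himgR _ ⟨hu', hhu', rfl⟩ (hBran _ this)
  have hcyc : (Walk.cons hadju P2).IsCycle := by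
    rw [Walk.cons_isCycle_iff]
    exact ⟨hP2path, hedge⟩
  have hlen := hlong (f u) (Walk.cons hadju P2) hcyc
  have hq1 : 1 ≤ q.length := by
    rcases Nat.eq_zero_or_pos q.length with h0 | h0
    · exact absurd (Walk.eq_of_length_eq_zero h0) h1ne
    · omega
  have hBlen : B.length = n - 1 := by
    rw [hBdef, Walk.length_copy, arcW_length]
  have : (Walk.cons hadju P2).length = P2.length + 1 := Walk.length_cons _ _
  rw [this, hP2def, Walk.length_append, Walk.length_append, Walk.length_reverse,
    Walk.length_reverse, hBlen] at hlen
  omega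

end Cycle2

section NE
variable {V : Type*} {G : SimpleGraph V}

lemma no_escape {n : ℕ} (hn : 3 ≤ n) (f : ZMod n → V) (hinj : Function.Injective f)
    (hadj : ∀ i : ZMod n, G.Adj (f i) (f (i + 1)))
    (hlong : ∀ (v : V) (c : G.Walk v v), c.IsCycle → c.length ≤ n)
    (H : (G.induce (Set.range f)ᶜ).ConnectedComponent)
    (u : ZMod n) (hu : ∃ h ∈ Subtype.val '' H.supp, G.Adj (f u) h) :
    ∀ (N : ℕ) {y : V} (q : G.Walk (f (u+1)) y), q.length ≤ N → q.IsPath →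
      y ∈ Subtype.val '' H.supp →
      (∀ w ∈ q.support, w ≠ f (u + 1) → w ∉ Set.range f) → False := by
  classical
  intro N
  induction N with
  | zero =>
      intro y q hlen hq hy hR
      have h0 : f (u+1) = y := Walk.eq_of_length_eq_zero (Nat.le_zero.mp hlen)
      obtain ⟨y', _, rfl⟩ := hy
      exact y'.2 (h0 ▸ ⟨u+1, rfl⟩)
  | succ N ih =>
      intro y q hlen hq hy hR
      by_cases hcase : ∃ w ∈ q.support, w ≠ f (u + 1) ∧ w ≠ y ∧ w ∈ Subtype.val '' H.supp
      · obtain ⟨w, hwmem, hw1, hwy, hwH⟩ := hcase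
        have hlt := length_takeUntil_lt q hwmem hwy
        refine ih (q.takeUntil w hwmem) (by omega) (hq.takeUntil hwmem) hwH ?_
        intro x hx hx1
        exact hR x (Walk.support_takeUntil_subset q hwmem hx) hx1
      · push_neg at hcase
        exact cycle2 hn f hinj hadj hlong H u hu q hq hy hR hcase

end NE
end AuxStmt7

/-- No path between successors of two neighbors of a component of `G - C` avoiding `C`. -/
theorem stmt_7 {V : Type*} [Fintype V] (G : SimpleGraph V) (n : ℕ) (hn : 3 ≤ n)
    (f : ZMod n → V) (hinj : Function.Injective f)
    (hadj : ∀ i : ZMod n, G.Adj (f i) (f (i + 1)))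
    (hlong : ∀ (v : V) (c : G.Walk v v), c.IsCycle → c.length ≤ n)
    (H : (G.induce (Set.range f)ᶜ).ConnectedComponent)
    (u v : ZMod n) (huv : u ≠ v)
    (hu : ∃ h ∈ Subtype.val '' H.supp, G.Adj (f u) h)
    (hv : ∃ h ∈ Subtype.val '' H.supp, G.Adj (f v) h) :
    (¬ ∃ p : G.Walk (f (u + 1)) (f (v + 1)), p.IsPath ∧
        ∀ w ∈ p.support, w ≠ f (u + 1) → w ≠ f (v + 1) → w ∉ Set.range f) ∧
    ¬ G.Adj (f (u + 1)) (f (v + 1)) := by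
  classical
  haveI : NeZero n := ⟨by omega⟩
  have himgR : ∀ w ∈ Subtype.val '' H.supp, w ∉ Set.range f := by
    rintro w ⟨w', _, rfl⟩; exact w'.2
  have huv1 : u + 1 ≠ v + 1 := fun h => huv (add_right_cancel h)
  have key : ¬ ∃ p : G.Walk (f (u + 1)) (f (v + 1)), p.IsPath ∧
      ∀ w ∈ p.support, w ≠ f (u + 1) → w ≠ f (v + 1) → w ∉ Set.range f := by
    rintro ⟨p, hp, hpint⟩
    by_cases hcase : ∃ w ∈ p.support, w ≠ f (u+1) ∧ w ≠ f (v+1) ∧ w ∈ Subtype.val '' H.supp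
    · obtain ⟨w, hwmem, hw1, hw2, hwH⟩ := hcase
      have hv2 : f (v + 1) ∉ (p.takeUntil w hwmem).support :=
        end_not_mem_takeUntil hp hwmem hw2
      refine no_escape hn f hinj hadj hlong H u hu (p.takeUntil w hwmem).length
        (p.takeUntil w hwmem) le_rfl (hp.takeUntil hwmem) hwH ?_
      intro x hx hx1
      exact hpint x (Walk.support_takeUntil_subset p hwmem hx) hx1 (fun h => hv2 (h ▸ hx))
    · push_neg at hcase
      -- Case 1: p avoids H entirely; build a long cycle through H and both arcs of C.
      obtain ⟨h0, hh0, hadju⟩ := hu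
      obtain ⟨hu', hhu', rfl⟩ := hh0
      obtain ⟨h1, hh1, hadjv⟩ := hv
      obtain ⟨hv', hhv', rfl⟩ := hh1
      obtain ⟨W, hW, hWs⟩ := exists_path_in_comp H hhv' hhu'
      set d : ℕ := (u - v).val with hddef
      have hd1 : 1 ≤ d := by
        rcases Nat.eq_zero_or_pos d with h | h
        · exact absurd (sub_eq_zero.mp ((ZMod.val_eq_zero _).mp h)) huv
        · exact h
      have hdn : d < n := ZMod.val_lt _
      have hcd : ((d : ℕ) : ZMod n) = u - v := ZMod.natCast_zmod_val _
      set k : ℕ := d - 1 with hkdef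
      set m : ℕ := n - 1 - d with hmdef
      have hk' : v + 1 + ((k : ℕ) : ZMod n) = u := by
        have : ((k : ℕ) : ZMod n) = (u - v) - 1 := by
          rw [hkdef, Nat.cast_sub hd1, hcd]; norm_num
        rw [this]; ring
      have hm' : u + 1 + ((m : ℕ) : ZMod n) = v := by
        have : ((m : ℕ) : ZMod n) = - 1 - (u - v) := by
          rw [hmdef, Nat.cast_sub (by omega), Nat.cast_sub (by omega), hcd,
            ZMod.natCast_self]
          ring
        rw [this]; ring
      set B1 : G.Walk (f u) (f (v+1)) :=
        ((arcW f hadj (v+1) k).copy rfl (congrArg f hk')).reverse with hB1def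
      set A : G.Walk (f (u+1)) (f v) :=
        (arcW f hadj (u+1) m).copy rfl (congrArg f hm') with hAdef
      have hB1mem : ∀ w ∈ B1.support, ∃ i ≤ k, w = f (v + 1 + (i : ZMod n)) := by
        intro w hw
        rw [hB1def, Walk.support_reverse, List.mem_reverse, Walk.support_copy,
          mem_arcW_support] at hw
        exact hw
      have hAmem : ∀ w ∈ A.support, ∃ j ≤ m, w = f (u + 1 + (j : ZMod n)) := by
        intro w hw
        rw [hAdef, Walk.support_copy, mem_arcW_support] at hw
        exact hw
      have hB1R : ∀ w ∈ B1.support, w ∈ Set.range f := by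
        intro w hw; obtain ⟨i, _, rfl⟩ := hB1mem w hw; exact ⟨_, rfl⟩
      have hAR : ∀ w ∈ A.support, w ∈ Set.range f := by
        intro w hw; obtain ⟨j, _, rfl⟩ := hAmem w hw; exact ⟨_, rfl⟩
      have hB1nodup : B1.support.Nodup := by
        rw [hB1def, Walk.support_reverse, List.nodup_reverse, Walk.support_copy]
        exact arcW_support_nodup f hadj hinj _ (by omega)
      have hAnodup : A.support.Nodup := by
        rw [hAdef, Walk.support_copy]
        exact arcW_support_nodup f hadj hinj _ (by omega)
      have hApath : A.IsPath := Walk.IsPath.mk' hAnodup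
      -- f(u+1) not on B1
      have hfu1B1 : f (u+1) ∉ B1.support := by
        intro hw
        obtain ⟨i, hik, hi⟩ := hB1mem _ hw
        have := hinj hi
        have : (i : ZMod n) = ((d : ℕ) : ZMod n) := by
          rw [hcd]
          have := this
          linear_combination -this
        have := castnat_inj (by omega) (by omega) this
        omega
      -- B1 and A supports disjoint
      have hB1A : ∀ w ∈ B1.support, w ∉ A.support := by
        intro w hwB hwA
        obtain ⟨i, hik, rfl⟩ := hB1mem _ hwB
        obtain ⟨j, hjm, hj⟩ := hAmem _ hwA
        have := hinj hj
        have heq : ((d + j : ℕ) : ZMod n) = (i : ZMod n) := by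
          push_cast
          rw [hcd]
          linear_combination -this
        have := castnat_inj (by omega) (by omega) heq
        omega
      -- tails of p.reverse
      have hprtail : ∀ w ∈ p.reverse.support.tail, w ∈ p.support ∧ w ≠ f (v+1) := by
        intro w hw
        refine ⟨?_, ?_⟩
        · have := mem_of_mem_support_tail hw
          rwa [Walk.support_reverse, List.mem_reverse] at this
        · intro h; subst h; exact start_not_mem_support_tail hp.reverse hw
      have hAtail : ∀ w ∈ A.support.tail, w ∈ A.support ∧ w ≠ f (u+1) := by
        intro w hw
        refine ⟨mem_of_mem_support_tail hw, ?_⟩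
        intro h; subst h; exact start_not_mem_support_tail hApath hw
      have hfuR : f u ∈ Set.range f := ⟨u, rfl⟩
      have hfvR : f v ∈ Set.range f := ⟨v, rfl⟩
      have hfu1R : f (u+1) ∈ Set.range f := ⟨u+1, rfl⟩
      have hfv1R : f (v+1) ∈ Set.range f := ⟨v+1, rfl⟩
      set mid : G.Walk (hu' : V) (f v) :=
        Walk.cons hadju.symm (B1.append (p.reverse.append A)) with hmiddef
      set P1 : G.Walk (hv' : V) (f v) := W.append mid with hP1def
      have hmidtail : mid.support.tail
          = B1.support ++ (p.reverse.support.tail ++ A.support.tail) := by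
        rw [hmiddef, Walk.support_cons, List.tail_cons, Walk.support_append,
          Walk.tail_support_append]
      have hP1path : P1.IsPath := by
        apply Walk.IsPath.mk'
        rw [hP1def, Walk.support_append, hmidtail, List.nodup_append]
        refine ⟨hW.support_nodup, ?_, ?_⟩
        · rw [List.nodup_append]
          refine ⟨hB1nodup, ?_, ?_⟩
          · rw [List.nodup_append]
            refine ⟨hp.reverse.support_nodup.tail, hAnodup.tail, ?_⟩
            intro w hwpr x hwA hwx; subst hwx
            obtain ⟨hwp, hwv1⟩ := hprtail w hwpr
            obtain ⟨hwAs, hwu1⟩ := hAtail w hwA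
            exact hpint w hwp hwu1 hwv1 (hAR w hwAs)
          · intro w hwB x hw2 hwx; subst hwx
            rcases List.mem_append.mp hw2 with hw2 | hw2
            · obtain ⟨hwp, hwv1⟩ := hprtail w hw2
              by_cases hwu1 : w = f (u+1)
              · exact hfu1B1 (hwu1 ▸ hwB)
              · exact hpint w hwp hwu1 hwv1 (hB1R w hwB)
            · exact hB1A w hwB (hAtail w hw2).1
        · intro w hwW x hw2 hwx; subst hwx
          have hwH : w ∈ Subtype.val '' H.supp := hWs w hwW
          have hwR : w ∉ Set.range f := himgR w hwH
          rcases List.mem_append.mp hw2 with hw2 | hw2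
          · exact hwR (hB1R w hw2)
          rcases List.mem_append.mp hw2 with hw2 | hw2
          · obtain ⟨hwp, hwv1⟩ := hprtail w hw2
            have hwu1 : w ≠ f (u+1) := fun h => hwR (h ▸ hfu1R)
            exact hcase w hwp hwu1 hwv1 hwH
          · exact hwR (hAR w (hAtail w hw2).1)
      have hedge : s(f v, (hv' : V)) ∉ P1.edges := by
        rw [hP1def, Walk.edges_append, hmiddef, Walk.edges_cons, Walk.edges_append,
          Walk.edges_append]
        intro hmem
        rcases List.mem_append.mp hmem with hmem | hmem
        · have := Walk.fst_mem_support_of_mem_edges _ hmem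
          exact himgR _ (hWs _ this) hfvR
        rcases List.mem_cons.mp hmem with hmem | hmem
        · rw [Sym2.eq_iff] at hmem
          rcases hmem with ⟨h1, h2⟩ | ⟨h1, h2⟩
          · exact himgR _ ⟨hu', hhu', h1.symm⟩ hfvR
          · exact huv (hinj h1.symm)
        rcases List.mem_append.mp hmem with hmem | hmem
        · have := Walk.snd_mem_support_of_mem_edges _ hmem
          exact himgR _ ⟨hv', hhv', rfl⟩ (hB1R _ this)
        rcases List.mem_append.mp hmem with hmem | hmem
        · have hmemp := Walk.snd_mem_support_of_mem_edges _ hmem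
          rw [Walk.support_reverse, List.mem_reverse] at hmemp
          have hne1 : (hv' : V) ≠ f (u+1) := fun h => himgR _ ⟨hv', hhv', rfl⟩ (h ▸ hfu1R)
          have hne2 : (hv' : V) ≠ f (v+1) := fun h => himgR _ ⟨hv', hhv', rfl⟩ (h ▸ hfv1R)
          exact hcase _ hmemp hne1 hne2 ⟨hv', hhv', rfl⟩
        · have := Walk.snd_mem_support_of_mem_edges _ hmem
          exact himgR _ ⟨hv', hhv', rfl⟩ (hAR _ this)
      have hcyc : (Walk.cons hadjv P1).IsCycle := by
        rw [Walk.cons_isCycle_iff]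
        exact ⟨hP1path, hedge⟩
      have hlen := hlong (f v) (Walk.cons hadjv P1) hcyc
      have hp1 : 1 ≤ p.length := by
        rcases Nat.eq_zero_or_pos p.length with hl | hl
        · exact absurd (hinj (Walk.eq_of_length_eq_zero hl)) huv1
        · exact hl
      have hlen3 : (Walk.cons hadjv P1).length = W.length + k + p.length + m + 2 := by
        simp only [hP1def, hmiddef, hB1def, hAdef, Walk.length_cons, Walk.length_append,
          Walk.length_reverse, Walk.length_copy, arcW_length]
        omega
      rw [hlen3] at hlen
      omega
  refine ⟨key, fun hadj' => key ⟨Walk.cons hadj' Walk.nil, ?_, ?_⟩⟩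
  · simp [Walk.isPath_def, hadj'.ne]
  · intro w hw h1 h2
    exfalso
    simp only [Walk.support_cons, Walk.support_nil, List.mem_cons, List.mem_singleton] at hw
    rcases hw with hw | hw | hw
    · exact h1 hw
    · exact h2 hw
    · simp at hw
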